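/- Let (b,c) be a connected graph over (X,m), let v ∈ 𝓓₀ with v > 0 and set w = 𝓛v/v. Then the following are equivalent: (i) 𝓛v² ∈ ℓ¹(X,m); (ii) v ∈ ℓ²(X,|w|m); (iii) v ∈ ℓ²(X,w₋m). If these equivalent conditions hold, then 𝓠(v) = w(v) = ∑_x m(x)w(x)v(x)² and ∑_x m(x)·𝓛v²(x) = ∑_x c(x)·v(x)². -/

import Mathlib

open Filter MeasureTheory Topology
open scoped ENNReal NNReal

noncomputable section

namespace HG

variable {X : Type*}

open scoped Classical

/-- `f` has finite support (membership in `C_c(X)`). -/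
def FinSupp (f : X → ℝ) : Prop := (Function.support f).Finite

/-- Membership in `𝓕`. -/
def MemF (b : X → X → ℝ) (f : X → ℝ) : Prop :=
  ∀ x : X, Summable fun y => b x y * |f y|

/-- The formal Laplacian `𝓛`. -/
def lap (b : X → X → ℝ) (c m : X → ℝ) (f : X → ℝ) (x : X) : ℝ :=
  (1 / m x) * ∑' y, b x y * (f x - f y) + (c x / m x) * f x

/-- The energy form `𝓠`, valued in `ℝ≥0∞`. -/
def energy (b : X → X → ℝ) (c : X → ℝ) (f : X → ℝ) : ℝ≥0∞ :=
  (1 / 2) * ∑' x, ∑' y, ENNReal.ofReal (b x y * (f x - f y) ^ 2)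
    + ∑' x, ENNReal.ofReal (c x * f x ^ 2)

/-- Membership in `𝓓`, the functions of finite energy. -/
def MemD (b : X → X → ℝ) (c : X → ℝ) (f : X → ℝ) : Prop := energy b c f < ⊤

/-- Membership in `𝓓₀`, the closure of `C_c(X)` w.r.t. `‖f‖_o = (𝓠(f)+f(o)²)^{1/2}`. -/
def MemD0 (b : X → X → ℝ) (c : X → ℝ) (o : X) (f : X → ℝ) : Prop :=
  ∃ φ : ℕ → X → ℝ, (∀ n, FinSupp (φ n)) ∧
    Tendsto (fun n => energy b c (fun x => f x - φ n x)
      + ENNReal.ofReal ((f o - φ n o) ^ 2)) atTop (nhds 0)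

/-- `(b,c)` is a connected graph over `(X,m)`. -/
structure IsGraph (b : X → X → ℝ) (c m : X → ℝ) : Prop where
  symm : ∀ x y, b x y = b y x
  nonneg : ∀ x y, 0 ≤ b x y
  loopless : ∀ x, b x x = 0
  deg_summable : ∀ x, Summable fun y => b x y
  c_nonneg : ∀ x, 0 ≤ c x
  m_pos : ∀ x, 0 < m x
  connected : ∀ x y : X, ∃ (k : ℕ) (p : ℕ → X), p 0 = x ∧ p k = y ∧
    ∀ i < k, 0 < b (p i) (p (i + 1))

/-- `u` is superharmonic: `u ∈ 𝓕` and `𝓛u ≥ 0`. -/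
def Superharmonic (b : X → X → ℝ) (c m : X → ℝ) (u : X → ℝ) : Prop :=
  MemF b u ∧ ∀ x, 0 ≤ lap b c m u x

/-- `u` is subharmonic: `u ∈ 𝓕` and `𝓛u ≤ 0`. -/
def Subharmonic (b : X → X → ℝ) (c m : X → ℝ) (u : X → ℝ) : Prop :=
  MemF b u ∧ ∀ x, lap b c m u x ≤ 0

/-- The Green operator `Gk(x) = ∑_y G(x,y) k(y)`. -/
def Gop (G : X → X → ℝ) (k : X → ℝ) (x : X) : ℝ := ∑' y, G x y * k y

/-- Membership in `𝓖`, the domain of the Green operator. -/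
def MemG (G : X → X → ℝ) (k : X → ℝ) : Prop :=
  ∀ x, Summable fun y => G x y * |k y|

/-- `u` is a potential: `u ∈ 𝓕`, `𝓛u ∈ 𝓖` and `u = G𝓛u`. -/
def IsPotential (b : X → X → ℝ) (c m : X → ℝ) (G : X → X → ℝ) (u : X → ℝ) : Prop :=
  MemF b u ∧ MemG G (lap b c m u) ∧ u = Gop G (lap b c m u)

/-- Membership in `𝓖₂ = {k ∈ 𝓖 : ∑_x m(x)|k(x)| (G|k|)(x) < ∞}`. -/
def MemG2 (m : X → ℝ) (G : X → X → ℝ) (k : X → ℝ) : Prop :=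
  MemG G k ∧ Summable fun x => m x * |k x| * Gop G (fun y => |k y|) x

/-- `G` is the Green function of the (transient) graph `(b,c)` over `(X,m)`:
for every `y`, `G(·,y)` is the unique function in `𝓓₀ ∩ 𝓕` with `𝓛 G(·,y) = 1_y`;
it is strictly positive and symmetric. -/
structure IsGreen (b : X → X → ℝ) (c m : X → ℝ) (o : X) (G : X → X → ℝ) : Prop where
  pos : ∀ x y, 0 < G x y
  symm : ∀ x y, G x y = G y x
  memF : ∀ y, MemF b fun x => G x y
  memD0 : ∀ y, MemD0 b c o fun x => G x y
  lap_eq : ∀ y x, lap b c m (fun z => G z y) x = if x = y then 1 else 0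
  unique : ∀ (y : X) (u : X → ℝ), MemF b u → MemD0 b c o u →
    (∀ x, lap b c m u x = if x = y then 1 else 0) → u = fun x => G x y

/-- `w(φ) = ∑_x m(x) w(x) φ(x)²`. -/
def wsum (m w φ : X → ℝ) : ℝ := ∑' x, m x * w x * φ x ^ 2

/-- `w` is a Hardy type weight: `𝓠(φ) ≥ ∑_x m(x) w(x) φ(x)²` for all `φ ∈ C_c(X)`. -/
def IsHardyType (b : X → X → ℝ) (c m w : X → ℝ) : Prop :=
  ∀ φ : X → ℝ, FinSupp φ → ENNReal.ofReal (wsum m w φ) ≤ energy b c φ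

/-- `w` is a Hardy weight: a non-negative Hardy type weight. -/
def IsHardy (b : X → X → ℝ) (c m w : X → ℝ) : Prop :=
  (∀ x, 0 ≤ w x) ∧ IsHardyType b c m w

/-- A Hardy weight is critical if the only Hardy weight above it is itself. -/
def IsCriticalHardy (b : X → X → ℝ) (c m w : X → ℝ) : Prop :=
  IsHardy b c m w ∧ ∀ w', IsHardy b c m w' → (∀ x, w x ≤ w' x) → w' = w

/-- A Hardy type weight is critical if the only Hardy type weight above it is itself. -/
def IsCriticalHardyType (b : X → X → ℝ) (c m w : X → ℝ) : Prop :=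
  IsHardyType b c m w ∧ ∀ w', IsHardyType b c m w' → (∀ x, w x ≤ w' x) → w' = w

/-- A ground state of `w`: a strictly positive `v ∈ 𝓕` with `𝓛v = wv`. -/
def IsGroundState (b : X → X → ℝ) (c m w v : X → ℝ) : Prop :=
  MemF b v ∧ (∀ x, 0 < v x) ∧ ∀ x, lap b c m v x = w x * v x

/-- A ground state of `w` obtained as pointwise limit of a null sequence. -/
def IsGroundStateSeq (b : X → X → ℝ) (c m w v : X → ℝ) : Prop :=
  IsGroundState b c m w v ∧
  ∃ e : ℕ → X → ℝ, (∀ n, FinSupp (e n)) ∧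
    Tendsto (fun n => (energy b c (e n)).toReal - wsum m w (e n)) atTop (nhds 0) ∧
    ∀ x, Tendsto (fun n => e n x) atTop (nhds (v x))

/-- Membership in `C₀(X)`, functions vanishing at infinity. -/
def MemC0 (f : X → ℝ) : Prop := ∀ ε : ℝ, 0 < ε → {x | ε ≤ |f x|}.Finite


section Aux
variable {X : Type*}

lemma summable_of_ofReal_ne_top {f : X → ℝ} (hf : ∀ x, 0 ≤ f x)
    (h : ∑' x, ENNReal.ofReal (f x) ≠ ⊤) : Summable f := by
  set g : X → ℝ≥0 := fun x => ⟨f x, hf x⟩ with hg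
  have h1 : ∀ x, ENNReal.ofReal (f x) = ((g x : ℝ≥0) : ℝ≥0∞) :=
    fun x => ENNReal.ofReal_eq_coe_nnreal (hf x)
  rw [tsum_congr h1] at h
  have hs := ENNReal.tsum_coe_ne_top_iff_summable.mp h
  have := NNReal.summable_coe.mpr hs
  exact this

lemma toReal_tsum_ofReal {f : X → ℝ} (hf : ∀ x, 0 ≤ f x) :
    (∑' x, ENNReal.ofReal (f x)).toReal = ∑' x, f x := by
  rw [ENNReal.tsum_toReal_eq (fun a => ENNReal.ofReal_ne_top)]
  exact tsum_congr fun x => ENNReal.toReal_ofReal (hf x)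

lemma tsum_ofReal_ne_top {f : X → ℝ} (hf : ∀ x, 0 ≤ f x) (h : Summable f) :
    ∑' x, ENNReal.ofReal (f x) ≠ ⊤ := by
  rw [← ENNReal.ofReal_tsum_of_nonneg hf h]
  exact ENNReal.ofReal_ne_top

lemma energy_eq_pair (b : X → X → ℝ) (c : X → ℝ) (f : X → ℝ) :
    energy b c f = (1/2) * (∑' p : X × X, ENNReal.ofReal (b p.1 p.2 * (f p.1 - f p.2) ^ 2))
      + ∑' x, ENNReal.ofReal (c x * f x ^ 2) := by
  rw [energy, ENNReal.tsum_prod']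

lemma energy_decomp {b : X → X → ℝ} {c : X → ℝ} (hb : ∀ x y, 0 ≤ b x y)
    (hc : ∀ x, 0 ≤ c x) {f : X → ℝ} (hE : energy b c f ≠ ⊤) :
    Summable (fun p : X × X => b p.1 p.2 * (f p.1 - f p.2) ^ 2) ∧
    Summable (fun x => c x * f x ^ 2) ∧
    (energy b c f).toReal
      = (1/2) * (∑' p : X × X, b p.1 p.2 * (f p.1 - f p.2) ^ 2) + ∑' x, c x * f x ^ 2 := by
  rw [energy_eq_pair] at hE
  have hnn1 : ∀ p : X × X, 0 ≤ b p.1 p.2 * (f p.1 - f p.2) ^ 2 :=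
    fun p => mul_nonneg (hb _ _) (sq_nonneg _)
  have hnn2 : ∀ x, 0 ≤ c x * f x ^ 2 := fun x => mul_nonneg (hc _) (sq_nonneg _)
  have hA : (1/2 : ℝ≥0∞) * (∑' p : X × X, ENNReal.ofReal (b p.1 p.2 * (f p.1 - f p.2) ^ 2)) ≠ ⊤ :=
    fun h => hE (by rw [h, top_add])
  have hB : (∑' x, ENNReal.ofReal (c x * f x ^ 2)) ≠ ⊤ :=
    fun h => hE (by rw [h, add_top])
  have hA' : (∑' p : X × X, ENNReal.ofReal (b p.1 p.2 * (f p.1 - f p.2) ^ 2)) ≠ ⊤ := by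
    intro h
    apply hA
    rw [h, ENNReal.mul_top (by norm_num)]
  refine ⟨summable_of_ofReal_ne_top hnn1 hA', summable_of_ofReal_ne_top hnn2 hB, ?_⟩
  rw [energy_eq_pair, ENNReal.toReal_add hA hB, ENNReal.toReal_mul,
    toReal_tsum_ofReal hnn1, toReal_tsum_ofReal hnn2]
  norm_num

lemma energy_term_le {b : X → X → ℝ} {c : X → ℝ} (f : X → ℝ) (x y : X) :
    ENNReal.ofReal (b x y * (f x - f y) ^ 2) ≤ 2 * energy b c f := by
  have h1 : ENNReal.ofReal (b x y * (f x - f y) ^ 2)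
      ≤ ∑' p : X × X, ENNReal.ofReal (b p.1 p.2 * (f p.1 - f p.2) ^ 2) :=
    ENNReal.le_tsum (x, y)
  refine h1.trans ?_
  rw [energy_eq_pair]
  calc (∑' p : X × X, ENNReal.ofReal (b p.1 p.2 * (f p.1 - f p.2) ^ 2))
      = 2 * ((1/2) * (∑' p : X × X, ENNReal.ofReal (b p.1 p.2 * (f p.1 - f p.2) ^ 2))) := by
        rw [← mul_assoc, one_div, ENNReal.mul_inv_cancel (by norm_num) (by norm_num), one_mul]
    _ ≤ 2 * ((1/2) * (∑' p : X × X, ENNReal.ofReal (b p.1 p.2 * (f p.1 - f p.2) ^ 2))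
        + ∑' x, ENNReal.ofReal (c x * f x ^ 2)) := by
        exact mul_le_mul_right le_self_add 2


lemma ofReal_two_mul (a : ℝ) : ENNReal.ofReal (2 * a) = 2 * ENNReal.ofReal a := by
  rw [ENNReal.ofReal_mul (by norm_num : (0:ℝ) ≤ 2)]
  norm_num

lemma energy_quad_le {b : X → X → ℝ} {c : X → ℝ} (hb : ∀ x y, 0 ≤ b x y)
    (hc : ∀ x, 0 ≤ c x) (f g : X → ℝ) :
    energy b c (fun x => f x + g x) ≤ 2 * energy b c f + 2 * energy b c g := by
  have key : ∀ (u w : ℝ≥0∞) (a a' e : ℝ), 0 ≤ a → 0 ≤ a' → e ≤ 2*a + 2*a' →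
      ENNReal.ofReal a ≤ u → ENNReal.ofReal a' ≤ w → ENNReal.ofReal e ≤ 2*u + 2*w := by
    intro u w a a' e ha ha' he hu hw
    calc ENNReal.ofReal e ≤ ENNReal.ofReal (2*a + 2*a') := ENNReal.ofReal_le_ofReal he
      _ = 2 * ENNReal.ofReal a + 2 * ENNReal.ofReal a' := by
          rw [ENNReal.ofReal_add (by positivity) (by positivity),
            ENNReal.ofReal_mul (by norm_num), ENNReal.ofReal_mul (by norm_num)]
          norm_num
      _ ≤ 2*u + 2*w := add_le_add (mul_le_mul_right hu 2) (mul_le_mul_right hw 2)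
  have hb' : ∀ x y, ENNReal.ofReal (b x y * ((f x + g x) - (f y + g y)) ^ 2)
      ≤ 2 * ENNReal.ofReal (b x y * (f x - f y)^2) + 2 * ENNReal.ofReal (b x y * (g x - g y)^2) := by
    intro x y
    exact key _ _ _ _ _ (mul_nonneg (hb _ _) (sq_nonneg _)) (mul_nonneg (hb _ _) (sq_nonneg _))
      (by nlinarith [hb x y, sq_nonneg ((f x - f y) - (g x - g y))]) le_rfl le_rfl
  have hc' : ∀ x, ENNReal.ofReal (c x * (f x + g x) ^ 2)
      ≤ 2 * ENNReal.ofReal (c x * f x ^ 2) + 2 * ENNReal.ofReal (c x * g x ^ 2) := by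
    intro x
    exact key _ _ _ _ _ (mul_nonneg (hc _) (sq_nonneg _)) (mul_nonneg (hc _) (sq_nonneg _))
      (by nlinarith [hc x, sq_nonneg (f x - g x)]) le_rfl le_rfl
  rw [energy, energy, energy]
  have h1 : (∑' x, ∑' y, ENNReal.ofReal (b x y * ((f x + g x) - (f y + g y)) ^ 2))
      ≤ 2 * (∑' x, ∑' y, ENNReal.ofReal (b x y * (f x - f y) ^ 2))
        + 2 * (∑' x, ∑' y, ENNReal.ofReal (b x y * (g x - g y) ^ 2)) := by
    calc (∑' x, ∑' y, ENNReal.ofReal (b x y * ((f x + g x) - (f y + g y)) ^ 2))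
        ≤ ∑' x, ∑' y, (2 * ENNReal.ofReal (b x y * (f x - f y)^2)
            + 2 * ENNReal.ofReal (b x y * (g x - g y)^2)) :=
          ENNReal.tsum_le_tsum fun x => ENNReal.tsum_le_tsum fun y => hb' x y
      _ = 2 * (∑' x, ∑' y, ENNReal.ofReal (b x y * (f x - f y) ^ 2))
          + 2 * (∑' x, ∑' y, ENNReal.ofReal (b x y * (g x - g y) ^ 2)) := by
          simp only [ENNReal.tsum_add, ENNReal.tsum_mul_left]
  have h2 : (∑' x, ENNReal.ofReal (c x * (f x + g x) ^ 2))
      ≤ 2 * (∑' x, ENNReal.ofReal (c x * f x ^ 2)) + 2 * (∑' x, ENNReal.ofReal (c x * g x ^ 2)) := by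
    calc (∑' x, ENNReal.ofReal (c x * (f x + g x) ^ 2))
        ≤ ∑' x, (2 * ENNReal.ofReal (c x * f x ^ 2) + 2 * ENNReal.ofReal (c x * g x ^ 2)) :=
          ENNReal.tsum_le_tsum hc'
      _ = _ := by simp only [ENNReal.tsum_add, ENNReal.tsum_mul_left]
  calc (1/2) * (∑' x, ∑' y, ENNReal.ofReal (b x y * ((f x + g x) - (f y + g y)) ^ 2))
        + ∑' x, ENNReal.ofReal (c x * (f x + g x) ^ 2)
      ≤ (1/2) * (2 * (∑' x, ∑' y, ENNReal.ofReal (b x y * (f x - f y) ^ 2))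
          + 2 * (∑' x, ∑' y, ENNReal.ofReal (b x y * (g x - g y) ^ 2)))
        + (2 * (∑' x, ENNReal.ofReal (c x * f x ^ 2)) + 2 * (∑' x, ENNReal.ofReal (c x * g x ^ 2))) :=
        add_le_add (mul_le_mul_right h1 _) h2
    _ = 2 * ((1/2) * (∑' x, ∑' y, ENNReal.ofReal (b x y * (f x - f y) ^ 2))
          + ∑' x, ENNReal.ofReal (c x * f x ^ 2))
        + 2 * ((1/2) * (∑' x, ∑' y, ENNReal.ofReal (b x y * (g x - g y) ^ 2))
          + ∑' x, ENNReal.ofReal (c x * g x ^ 2)) := by ring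

lemma energy_finsupp_ne_top {b : X → X → ℝ} {c : X → ℝ} {m : X → ℝ}
    (hsym : ∀ x y, b x y = b y x) (hb : ∀ x y, 0 ≤ b x y)
    (hdeg : ∀ x, Summable fun y => b x y) {φ : X → ℝ} (hφ : FinSupp φ) :
    energy b c φ ≠ ⊤ := by
  classical
  have key : ∀ ψ : X → ℝ, FinSupp ψ →
      (∑' x, ∑' y, ENNReal.ofReal (b x y * ψ x ^ 2)) ≠ ⊤ := by
    intro ψ hψ
    have hx : ∀ x, (∑' y, ENNReal.ofReal (b x y * ψ x ^ 2))
        = ENNReal.ofReal (ψ x ^ 2) * ENNReal.ofReal (∑' y, b x y) := by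
      intro x
      rw [ENNReal.ofReal_tsum_of_nonneg (fun y => hb x y) (hdeg x), ← ENNReal.tsum_mul_left]
      exact tsum_congr fun y => by rw [mul_comm, ENNReal.ofReal_mul (sq_nonneg _)]
    have hzero : ∀ x ∉ hψ.toFinset, (∑' y, ENNReal.ofReal (b x y * ψ x ^ 2)) = 0 := by
      intro x hx'
      have hψx : ψ x = 0 := by
        by_contra hne
        exact hx' ((Set.Finite.mem_toFinset hψ).mpr hne)
      simp [hψx]
    rw [tsum_eq_sum hzero]
    exact (ENNReal.sum_lt_top.mpr (fun x _ => by rw [hx x]; exact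
      (ENNReal.mul_lt_top ENNReal.ofReal_lt_top ENNReal.ofReal_lt_top))).ne
  rw [energy]
  have hswap : (∑' x, ∑' y, ENNReal.ofReal (b x y * φ y ^ 2))
      = ∑' x, ∑' y, ENNReal.ofReal (b x y * φ x ^ 2) := by
    have e1 : (∑' x, ∑' y, ENNReal.ofReal (b x y * φ y ^ 2))
        = ∑' p : X × X, ENNReal.ofReal (b p.1 p.2 * φ p.2 ^ 2) :=
      (ENNReal.tsum_prod' (f := fun p : X × X => ENNReal.ofReal (b p.1 p.2 * φ p.2 ^ 2))).symm
    have e2 : (∑' x, ∑' y, ENNReal.ofReal (b x y * φ x ^ 2))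
        = ∑' p : X × X, ENNReal.ofReal (b p.1 p.2 * φ p.1 ^ 2) :=
      (ENNReal.tsum_prod' (f := fun p : X × X => ENNReal.ofReal (b p.1 p.2 * φ p.1 ^ 2))).symm
    rw [e1, e2,
      ← (Equiv.prodComm X X).tsum_eq (fun p : X × X => ENNReal.ofReal (b p.1 p.2 * φ p.1 ^ 2))]
    exact tsum_congr fun p => by simp [Equiv.prodComm, hsym p.1 p.2]
  have hbnd : (∑' x, ∑' y, ENNReal.ofReal (b x y * (φ x - φ y) ^ 2))
      ≤ 2 * (∑' x, ∑' y, ENNReal.ofReal (b x y * φ x ^ 2))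
        + 2 * (∑' x, ∑' y, ENNReal.ofReal (b x y * φ y ^ 2)) := by
    calc (∑' x, ∑' y, ENNReal.ofReal (b x y * (φ x - φ y) ^ 2))
        ≤ ∑' x, ∑' y, (2 * ENNReal.ofReal (b x y * φ x ^ 2) + 2 * ENNReal.ofReal (b x y * φ y ^ 2)) := by
          refine ENNReal.tsum_le_tsum fun x => ENNReal.tsum_le_tsum fun y => ?_
          calc ENNReal.ofReal (b x y * (φ x - φ y) ^ 2)
              ≤ ENNReal.ofReal (2 * (b x y * φ x ^ 2) + 2 * (b x y * φ y ^ 2)) :=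
              ENNReal.ofReal_le_ofReal (by nlinarith [hb x y, sq_nonneg (φ x + φ y)])
            _ = 2 * ENNReal.ofReal (b x y * φ x ^ 2) + 2 * ENNReal.ofReal (b x y * φ y ^ 2) := by
              rw [ENNReal.ofReal_add
                (mul_nonneg (by norm_num) (mul_nonneg (hb x y) (sq_nonneg _)))
                (mul_nonneg (by norm_num) (mul_nonneg (hb x y) (sq_nonneg _))),
                ofReal_two_mul, ofReal_two_mul]
      _ = _ := by simp only [ENNReal.tsum_add, ENNReal.tsum_mul_left]
  have hcterm : (∑' x, ENNReal.ofReal (c x * φ x ^ 2)) ≠ ⊤ := by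
    have hzero : ∀ x ∉ hφ.toFinset, ENNReal.ofReal (c x * φ x ^ 2) = 0 := by
      intro x hx'
      have hφx : φ x = 0 := by
        by_contra hne
        exact hx' ((Set.Finite.mem_toFinset hφ).mpr hne)
      simp [hφx]
    rw [tsum_eq_sum hzero]
    exact (ENNReal.sum_lt_top.mpr (fun x _ => ENNReal.ofReal_lt_top)).ne
  intro htop
  rcases ENNReal.add_eq_top.mp htop with h | h
  · have h' : (∑' x, ∑' y, ENNReal.ofReal (b x y * (φ x - φ y) ^ 2)) = ⊤ := by
      by_contra hne
      exact (ENNReal.mul_lt_top (by norm_num) (lt_top_iff_ne_top.mpr hne)).ne h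
    have : (2 : ℝ≥0∞) * (∑' x, ∑' y, ENNReal.ofReal (b x y * φ x ^ 2))
        + 2 * (∑' x, ∑' y, ENNReal.ofReal (b x y * φ y ^ 2)) ≠ ⊤ := by
      rw [hswap]
      exact ENNReal.add_ne_top.mpr ⟨ENNReal.mul_ne_top (by norm_num) (key φ hφ),
        ENNReal.mul_ne_top (by norm_num) (key φ hφ)⟩
    exact this (top_le_iff.mp (h' ▸ hbnd))
  · exact hcterm h

lemma mul_lap {b : X → X → ℝ} {c m : X → ℝ} (hm : ∀ x, 0 < m x) (f : X → ℝ) (x : X) :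
    m x * lap b c m f x = (∑' y, b x y * (f x - f y)) + c x * f x := by
  rw [lap]
  have hmx : m x ≠ 0 := (hm x).ne'
  field_simp

lemma clamp_sq_le (a a' t t' : ℝ) :
    (min (max a 0) t - min (max a' 0) t') ^ 2 ≤ (a - a') ^ 2 + (t - t') ^ 2 := by
  have h1 := abs_min_sub_min_le_max (max a 0) t (max a' 0) t'
  have h2 : |max a 0 - max a' 0| ≤ |a - a'| := by
    have := abs_max_sub_max_le_max a 0 a' 0
    simpa using this
  have h3 : |min (max a 0) t - min (max a' 0) t'| ≤ max (|a - a'|) (|t - t'|) :=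
    h1.trans (max_le_max h2 le_rfl)
  have h4 := pow_le_pow_left₀ (abs_nonneg _) h3 2
  rw [sq_abs] at h4
  rcases max_cases (|a - a'|) (|t - t'|) with ⟨hm1, _⟩ | ⟨hm1, _⟩ <;> rw [hm1] at h4 <;>
    nlinarith [sq_abs (a - a'), sq_abs (t - t'), sq_nonneg (a - a'), sq_nonneg (t - t')]


lemma green {b : X → X → ℝ} {c m v : X → ℝ} (hm : ∀ x, 0 < m x)
    (hsym : ∀ x y, b x y = b y x) (hb : ∀ x y, 0 ≤ b x y)
    (hΔ : ∀ x, Summable fun y => b x y * (v x - v y))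
    (hΔabs : ∀ x, Summable fun y => b x y * |v x - v y|)
    {φ : X → ℝ} (hφ : FinSupp φ) :
    Summable (fun p : X × X => b p.1 p.2 * (v p.1 - v p.2) * (φ p.1 - φ p.2)) ∧
    ∑' x, m x * lap b c m v x * φ x
      = (1/2) * (∑' p : X × X, b p.1 p.2 * (v p.1 - v p.2) * (φ p.1 - φ p.2))
        + ∑' x, c x * v x * φ x := by
  classical
  set F : X × X → ℝ := fun p => b p.1 p.2 * (v p.1 - v p.2) * φ p.1 with hF
  have habs : Summable (fun p : X × X => b p.1 p.2 * |v p.1 - v p.2| * |φ p.1|) := by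
    refine (summable_prod_of_nonneg ?_).mpr ⟨?_, ?_⟩
    · intro p; exact mul_nonneg (mul_nonneg (hb _ _) (abs_nonneg _)) (abs_nonneg _)
    · intro x; exact (hΔabs x).mul_right |φ x|
    · apply summable_of_finite_support
      refine Set.Finite.subset hφ fun x hx => ?_
      simp only [Function.mem_support] at hx ⊢
      intro h0
      exact hx (by simp [h0])
  have hFabs : Summable (fun p : X × X => |F p|) := by
    refine habs.congr fun p => ?_
    rw [hF]
    rw [abs_mul, abs_mul, abs_of_nonneg (hb _ _)]
  have hFsum : Summable F := summable_abs_iff.mp hFabs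
  have hswap : Summable (fun p : X × X => F ((Equiv.prodComm X X) p)) :=
    ((Equiv.prodComm X X).summable_iff).mpr hFsum
  have hF2 : Summable (fun p : X × X => b p.1 p.2 * (v p.1 - v p.2) * φ p.2) := by
    refine hswap.neg.congr fun p => ?_
    simp only [hF, Equiv.prodComm_apply, Prod.fst_swap, Prod.snd_swap]
    rw [hsym p.2 p.1]
    ring
  have e := (Equiv.prodComm X X).tsum_eq F
  have e1 : ∑' p : X × X, F ((Equiv.prodComm X X) p)
      = ∑' p : X × X, -(b p.1 p.2 * (v p.1 - v p.2) * φ p.2) := by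
    refine tsum_congr fun p => ?_
    simp only [hF, Equiv.prodComm_apply, Prod.fst_swap, Prod.snd_swap]
    rw [hsym p.2 p.1]
    ring
  rw [e1, tsum_neg] at e
  have hpair : Summable (fun p : X × X => b p.1 p.2 * (v p.1 - v p.2) * (φ p.1 - φ p.2)) := by
    refine (hFsum.sub hF2).congr fun p => ?_
    simp only [hF]
    ring
  have hpsum : ∑' p : X × X, b p.1 p.2 * (v p.1 - v p.2) * (φ p.1 - φ p.2)
      = 2 * ∑' p : X × X, F p := by
    have h1 : ∑' p : X × X, b p.1 p.2 * (v p.1 - v p.2) * (φ p.1 - φ p.2)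
        = (∑' p : X × X, F p) - ∑' p : X × X, b p.1 p.2 * (v p.1 - v p.2) * φ p.2 := by
      rw [← Summable.tsum_sub hFsum hF2]
      refine tsum_congr fun p => ?_
      simp only [hF]
      ring
    have e' : ∑' p : X × X, b p.1 p.2 * (v p.1 - v p.2) * φ p.2 = -∑' p : X × X, F p := by
      linarith [e]
    rw [h1, e']
    ring
  have hL : ∀ x, m x * lap b c m v x * φ x
      = (∑' y, b x y * (v x - v y)) * φ x + c x * v x * φ x := by
    intro x
    rw [mul_lap hm v x]
    ring
  have hsum1 : Summable (fun x => (∑' y, b x y * (v x - v y)) * φ x) := by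
    apply summable_of_finite_support
    refine Set.Finite.subset hφ fun x hx => ?_
    simp only [Function.mem_support] at hx ⊢
    intro h0
    exact hx (by simp [h0])
  have hsum2 : Summable (fun x => c x * v x * φ x) := by
    apply summable_of_finite_support
    refine Set.Finite.subset hφ fun x hx => ?_
    simp only [Function.mem_support] at hx ⊢
    intro h0
    exact hx (by simp [h0])
  have hterm1 : ∑' x, (∑' y, b x y * (v x - v y)) * φ x = ∑' p : X × X, F p := by
    rw [Summable.tsum_prod' hFsum (fun x => ((hΔ x).mul_right (φ x)))]
    exact tsum_congr fun x => (tsum_mul_right).symm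
  refine ⟨hpair, ?_⟩
  rw [tsum_congr hL, Summable.tsum_add hsum1 hsum2, hterm1, hpsum]
  ring

lemma tendsto_toReal_zero {f : ℕ → ℝ≥0∞} (h : Tendsto f atTop (nhds 0)) :
    Tendsto (fun n => (f n).toReal) atTop (nhds 0) := by
  have := (ENNReal.tendsto_toReal (a := 0) (by simp)).comp h
  simpa [Function.comp_def] using this

lemma tendsto_zero_of_sq {f : ℕ → ℝ} (h : Tendsto (fun n => (f n) ^ 2) atTop (nhds 0)) :
    Tendsto f atTop (nhds 0) := by
  have h3 : Tendsto (fun n => |f n|) atTop (nhds 0) := by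
    have h2 := (Real.continuous_sqrt.tendsto 0).comp h
    rw [Real.sqrt_zero] at h2
    refine h2.congr fun n => ?_
    simp [Function.comp, Real.sqrt_sq_eq_abs]
  exact (tendsto_zero_iff_abs_tendsto_zero _).mpr h3

lemma amgm (bb u ww t : ℝ) (hb : 0 ≤ bb) (ht : 0 < t) :
    |bb * u * ww| ≤ t / 2 * (bb * u ^ 2) + 1 / (2 * t) * (bb * ww ^ 2) := by
  have h2t : (0:ℝ) < 2 * t := by linarith
  have key : 2 * t * |bb * u * ww| ≤ t ^ 2 * (bb * u ^ 2) + bb * ww ^ 2 := by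
    rcases abs_cases (bb * u * ww) with ⟨h1, _⟩ | ⟨h1, _⟩ <;> rw [h1] <;>
      nlinarith [mul_nonneg hb (sq_nonneg (t * u - ww)), mul_nonneg hb (sq_nonneg (t * u + ww))]
  calc |bb * u * ww| ≤ (t ^ 2 * (bb * u ^ 2) + bb * ww ^ 2) / (2 * t) := by
        rw [le_div_iff₀ h2t]; linarith
    _ = t / 2 * (bb * u ^ 2) + 1 / (2 * t) * (bb * ww ^ 2) := by field_simp

lemma max_zero_sub (a : ℝ) : max a 0 - max (-a) 0 = a := by
  rcases le_total a 0 with h | h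
  · rw [max_eq_right h, max_eq_left (neg_nonneg.mpr h)]; ring
  · rw [max_eq_left h, max_eq_right (neg_nonpos.mpr h)]; ring

lemma max_zero_add (a : ℝ) : max a 0 + max (-a) 0 = |a| := by
  rcases le_total a 0 with h | h
  · rw [max_eq_right h, max_eq_left (neg_nonneg.mpr h), abs_of_nonpos h]; ring
  · rw [max_eq_left h, max_eq_right (neg_nonpos.mpr h), abs_of_nonneg h]; ring

end Aux

set_option maxHeartbeats 2000000 in
/-- Proposition 3.10. Let `v ∈ 𝓓₀`, `v > 0` and
`w = 𝓛v/v`. Then the following are equivalent: (i) `𝓛v² ∈ ℓ¹(X,m)`;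
(ii) `v ∈ ℓ²(X,|w|m)`; (iii) `v ∈ ℓ²(X,w₋m)`. If these hold, then
`𝓠(v) = w(v)` and `∑_x m(x) 𝓛v²(x) = ∑_x c(x) v(x)²`. -/
theorem stmt16 {X : Type*} [Countable X] (b : X → X → ℝ) (c m : X → ℝ) (o : X)
    (hg : IsGraph b c m) (v : X → ℝ) (hv0 : MemD0 b c o v)
    (hvpos : ∀ x, 0 < v x) (w : X → ℝ)
    (hw : ∀ x, w x = lap b c m v x / v x) :
    ((Summable fun x => m x * |lap b c m (fun y => v y ^ 2) x|) ↔
      (Summable fun x => m x * |w x| * v x ^ 2)) ∧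
    ((Summable fun x => m x * |w x| * v x ^ 2) ↔
      (Summable fun x => m x * max (-w x) 0 * v x ^ 2)) ∧
    ((Summable fun x => m x * |lap b c m (fun y => v y ^ 2) x|) →
      (energy b c v).toReal = wsum m w v ∧
      ∑' x, m x * lap b c m (fun y => v y ^ 2) x = ∑' x, c x * v x ^ 2) := by
  classical
  obtain ⟨φ0, hφ0fin, hφ0conv⟩ := hv0
  have hbnn := hg.nonneg
  have hsym := hg.symm
  have hmp := hg.m_pos
  have hcnn := hg.c_nonneg
  have hdeg := hg.deg_summable
  -- convergence of the approximating sequence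
  have hEn : Tendsto (fun n => energy b c (fun x => v x - φ0 n x)) atTop (nhds 0) :=
    tendsto_of_tendsto_of_tendsto_of_le_of_le tendsto_const_nhds hφ0conv
      (fun n => zero_le) (fun n => le_self_add)
  have hOe : Tendsto (fun n => ENNReal.ofReal ((v o - φ0 n o) ^ 2)) atTop (nhds 0) :=
    tendsto_of_tendsto_of_tendsto_of_le_of_le tendsto_const_nhds hφ0conv
      (fun n => zero_le) (fun n => le_add_self)
  have hOn : Tendsto (fun n => v o - φ0 n o) atTop (nhds 0) := by
    refine tendsto_zero_of_sq ?_
    have h1 := tendsto_toReal_zero hOe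
    refine h1.congr fun n => ?_
    exact ENNReal.toReal_ofReal (sq_nonneg _)
  -- energy of v is finite
  have hEv : energy b c v ≠ ⊤ := by
    obtain ⟨n1, hn1⟩ := (hEn.eventually_lt_const zero_lt_one).exists
    have hfin := energy_finsupp_ne_top (c := c) (m := m) hsym hbnn hdeg (hφ0fin n1)
    have hle := energy_quad_le hbnn hcnn (fun x => v x - φ0 n1 x) (φ0 n1)
    have hveq : (fun x => (v x - φ0 n1 x) + φ0 n1 x) = v := by funext x; ring
    rw [hveq] at hle
    intro htop
    rw [htop] at hle
    have hne : (2:ℝ≥0∞) * energy b c (fun x => v x - φ0 n1 x) + 2 * energy b c (φ0 n1) ≠ ⊤ :=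
      ENNReal.add_ne_top.mpr ⟨ENNReal.mul_ne_top (by norm_num) (ne_top_of_lt hn1),
        ENNReal.mul_ne_top (by norm_num) hfin⟩
    exact hne (top_le_iff.mp hle)
  obtain ⟨hpairv, hcv, htoRv⟩ := energy_decomp hbnn hcnn hEv
  have hP2nn : (0:ℝ) ≤ ∑' p : X × X, b p.1 p.2 * (v p.1 - v p.2) ^ 2 :=
    tsum_nonneg fun p => mul_nonneg (hbnn _ _) (sq_nonneg _)
  -- row summability facts
  have hrow : ∀ x, Summable fun y => b x y * (v x - v y) ^ 2 := by
    intro x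
    have hinj : Function.Injective (fun y => ((x, y) : X × X)) :=
      fun a a' h => by simpa using congrArg Prod.snd h
    exact hpairv.comp_injective hinj
  have hbv2 : ∀ x, Summable fun y => b x y * v y ^ 2 := by
    intro x
    refine Summable.of_nonneg_of_le (fun y => mul_nonneg (hbnn x y) (sq_nonneg _)) (fun y => ?_)
      (((hrow x).mul_left 2).add ((hdeg x).mul_left (2 * v x ^ 2)))
    nlinarith [hbnn x y, mul_nonneg (hbnn x y) (sq_nonneg (2 * v x - v y))]
  have hbv1 : ∀ x, Summable fun y => b x y * v y := by
    intro x
    refine Summable.of_nonneg_of_le (fun y => mul_nonneg (hbnn x y) (hvpos y).le) (fun y => ?_)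
      ((hdeg x).add (hbv2 x))
    nlinarith [hbnn x y, mul_nonneg (hbnn x y) (sq_nonneg (v y - 1))]
  have hΔ : ∀ x, Summable fun y => b x y * (v x - v y) := by
    intro x
    refine (((hdeg x).mul_right (v x)).sub (hbv1 x)).congr fun y => ?_
    ring
  have hΔabs : ∀ x, Summable fun y => b x y * |v x - v y| := by
    intro x
    refine Summable.of_nonneg_of_le (fun y => mul_nonneg (hbnn x y) (abs_nonneg _)) (fun y => ?_)
      (((hdeg x).mul_right (v x)).add (hbv1 x))
    have h1 : |v x - v y| ≤ v x + v y :=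
      abs_le.mpr ⟨by linarith [hvpos x, hvpos y], by linarith [hvpos y]⟩
    calc b x y * |v x - v y| ≤ b x y * (v x + v y) :=
          mul_le_mul_of_nonneg_left h1 (hbnn x y)
      _ = b x y * v x + b x y * v y := by ring
  -- pointwise convergence via connectedness
  have hpt : ∀ x, Tendsto (fun n => v x - φ0 n x) atTop (nhds 0) := by
    intro x
    obtain ⟨k, p, hp0, hpk, hppos⟩ := hg.connected o x
    suffices h : ∀ i, i ≤ k → Tendsto (fun n => v (p i) - φ0 n (p i)) atTop (nhds 0) by
      have := h k le_rfl
      rwa [hpk] at this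
    intro i
    induction i with
    | zero => intro _; rw [hp0]; exact hOn
    | succ i ih =>
      intro hik
      have hi := ih (Nat.le_of_succ_le hik)
      have hβ : 0 < b (p i) (p (i+1)) := hppos i (Nat.lt_of_succ_le hik)
      have hsq : Tendsto (fun n => ((v (p i) - φ0 n (p i)) - (v (p (i+1)) - φ0 n (p (i+1)))) ^ 2)
          atTop (nhds 0) := by
        have hub : ∀ᶠ n in atTop,
            ((v (p i) - φ0 n (p i)) - (v (p (i+1)) - φ0 n (p (i+1)))) ^ 2
            ≤ (2 * energy b c (fun x => v x - φ0 n x)).toReal / b (p i) (p (i+1)) := by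
          filter_upwards [hEn.eventually_lt_const zero_lt_one] with n hn
          have hterm := energy_term_le (b := b) (c := c) (fun x => v x - φ0 n x) (p i) (p (i+1))
          have h2top : (2 : ℝ≥0∞) * energy b c (fun x => v x - φ0 n x) ≠ ⊤ :=
            ENNReal.mul_ne_top (by norm_num) (ne_top_of_lt hn)
          have hmono := ENNReal.toReal_mono h2top hterm
          rw [ENNReal.toReal_ofReal (mul_nonneg hβ.le (sq_nonneg _))] at hmono
          rw [le_div_iff₀ hβ]
          linarith [hmono]
        have hto : Tendsto (fun n => (2 * energy b c (fun x => v x - φ0 n x)).toReal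
            / b (p i) (p (i+1))) atTop (nhds 0) := by
          have h1 : Tendsto (fun n => (2:ℝ≥0∞) * energy b c (fun x => v x - φ0 n x))
              atTop (nhds 0) := by
            have := ENNReal.Tendsto.const_mul (a := (2:ℝ≥0∞)) hEn (Or.inr (by norm_num))
            simpa using this
          have h2 := tendsto_toReal_zero h1
          simpa using h2.div_const (b (p i) (p (i+1)))
        exact squeeze_zero' (Eventually.of_forall fun n => sq_nonneg _) hub hto
      have hd := tendsto_zero_of_sq hsq
      have h2 := hi.sub hd
      rw [sub_zero] at h2
      exact h2.congr fun n => by ring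
  -- the clamped sequence
  set ψ : ℕ → X → ℝ := fun n x => min (max (φ0 n x) 0) (v x) with hψdef
  have hψfin : ∀ n, FinSupp (ψ n) := by
    intro n
    refine Set.Finite.subset (hφ0fin n) fun x hx => ?_
    simp only [Function.mem_support] at hx ⊢
    intro h0
    apply hx
    simp [hψdef, h0, (hvpos x).le]
  have hψnn : ∀ n x, 0 ≤ ψ n x := fun n x => le_min (le_max_right _ _) (hvpos x).le
  have hψle : ∀ n x, ψ n x ≤ v x := fun n x => min_le_right _ _
  have hψpt : ∀ x, Tendsto (fun n => ψ n x) atTop (nhds (v x)) := by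
    intro x
    have hφx : Tendsto (fun n => φ0 n x) atTop (nhds (v x)) := by
      have h1 := (tendsto_const_nhds (x := v x) (f := atTop (α := ℕ))).sub (hpt x)
      rw [sub_zero] at h1
      exact h1.congr fun n => by ring
    have h1 : Tendsto (fun n => max (φ0 n x) 0) atTop (nhds (max (v x) 0)) :=
      hφx.max tendsto_const_nhds
    rw [max_eq_left (hvpos x).le] at h1
    have h2 : Tendsto (fun n => min (max (φ0 n x) 0) (v x)) atTop (nhds (min (v x) (v x))) :=
      h1.min tendsto_const_nhds
    rw [min_self] at h2
    exact h2
  -- notation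
  have hlapv : ∀ x, lap b c m v x = w x * v x := by
    intro x
    rw [hw x, div_mul_cancel₀ _ (hvpos x).ne']
  have hLv : ∀ x, (m x * lap b c m v x) * v x = m x * w x * v x ^ 2 := by
    intro x
    rw [hlapv x]
    ring
  have idw2 : ∀ x, m x * |w x| * v x ^ 2 = |(m x * lap b c m v x) * v x| := by
    intro x
    rw [hLv x, abs_mul, abs_mul, abs_of_pos (hmp x), abs_of_nonneg (sq_nonneg (v x))]
  have idw3 : ∀ x, m x * max (-w x) 0 * v x ^ 2 = max (-((m x * lap b c m v x) * v x)) 0 := by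
    intro x
    rw [hLv x]
    have h1 : m x * max (-w x) 0 * v x ^ 2 = max (-w x) 0 * (m x * v x ^ 2) := by ring
    rw [h1, max_mul_of_nonneg _ _ (mul_nonneg (hmp x).le (sq_nonneg _)), zero_mul]
    congr 1
    ring
  -- the function d and the identity for lap v²
  have hdnn : ∀ x, (0:ℝ) ≤ (∑' y, b x y * (v x - v y) ^ 2) + c x * v x ^ 2 := fun x =>
    add_nonneg (tsum_nonneg fun y => mul_nonneg (hbnn x y) (sq_nonneg _))
      (mul_nonneg (hcnn x) (sq_nonneg _))
  have hmarg : Summable (fun x => ∑' y, b x y * (v x - v y) ^ 2) :=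
    ((summable_prod_of_nonneg (fun p => mul_nonneg (hbnn _ _) (sq_nonneg _))).mp hpairv).2
  have hdsum : Summable (fun x => (∑' y, b x y * (v x - v y) ^ 2) + c x * v x ^ 2) :=
    hmarg.add hcv
  have hdtsum : ∑' x, ((∑' y, b x y * (v x - v y) ^ 2) + c x * v x ^ 2)
      = (∑' p : X × X, b p.1 p.2 * (v p.1 - v p.2) ^ 2) + ∑' x, c x * v x ^ 2 := by
    rw [Summable.tsum_add hmarg hcv]
    congr 1
    rw [Summable.tsum_prod' hpairv (fun x => hrow x)]
  have idd : ∀ x, m x * lap b c m (fun y => v y ^ 2) x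
      = 2 * ((m x * lap b c m v x) * v x) - ((∑' y, b x y * (v x - v y) ^ 2) + c x * v x ^ 2) := by
    intro x
    rw [mul_lap hmp (fun y => v y ^ 2) x, mul_lap hmp v x]
    have hsplit : ∑' y, b x y * (v x ^ 2 - v y ^ 2)
        = 2 * v x * (∑' y, b x y * (v x - v y)) - ∑' y, b x y * (v x - v y) ^ 2 := by
      rw [← tsum_mul_left, ← Summable.tsum_sub ((hΔ x).mul_left (2 * v x)) (hrow x)]
      exact tsum_congr fun y => by ring
    rw [hsplit]
    ring
  -- THE CORE ARGUMENT
  have core : (Summable fun x => max (-((m x * lap b c m v x) * v x)) 0) →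
      (Summable (fun x => |(m x * lap b c m v x) * v x|) ∧
        ∑' x, (m x * lap b c m v x) * v x
          = (1/2) * (∑' p : X × X, b p.1 p.2 * (v p.1 - v p.2) ^ 2) + ∑' x, c x * v x ^ 2) := by
    intro hiii
    have hgreen : ∀ n, Summable (fun p : X × X => b p.1 p.2 * (v p.1 - v p.2) * (ψ n p.1 - ψ n p.2)) ∧
        ∑' x, m x * lap b c m v x * ψ n x
          = (1/2) * (∑' p : X × X, b p.1 p.2 * (v p.1 - v p.2) * (ψ n p.1 - ψ n p.2))
            + ∑' x, c x * v x * ψ n x :=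
      fun n => green hmp hsym hbnn hΔ hΔabs (hψfin n)
    -- limit of the c-part
    have hCS : Tendsto (fun n => ∑' x, c x * v x * ψ n x) atTop (nhds (∑' x, c x * v x ^ 2)) := by
      refine tendsto_tsum_of_dominated_convergence (bound := fun x => c x * v x ^ 2) hcv
        (fun x => ?_) (Eventually.of_forall fun n x => ?_)
      · have h1 := (hψpt x).const_mul (c x * v x)
        have h2 : c x * v x * v x = c x * v x ^ 2 := by ring
        rw [h2] at h1
        exact h1
      · rw [Real.norm_eq_abs,
          abs_of_nonneg (mul_nonneg (mul_nonneg (hcnn x) (hvpos x).le) (hψnn n x))]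
        calc c x * v x * ψ n x ≤ c x * v x * v x :=
              mul_le_mul_of_nonneg_left (hψle n x) (mul_nonneg (hcnn x) (hvpos x).le)
          _ = c x * v x ^ 2 := by ring
    -- eventual control on the pair energy of v - ψ n
    have hgnE : ∀ᶠ n in atTop,
        Summable (fun p : X × X => b p.1 p.2 * ((v p.1 - ψ n p.1) - (v p.2 - ψ n p.2)) ^ 2)
        ∧ (∑' p : X × X, b p.1 p.2 * ((v p.1 - ψ n p.1) - (v p.2 - ψ n p.2)) ^ 2)
            ≤ 8 * (∑' p : X × X, b p.1 p.2 * (v p.1 - v p.2) ^ 2) + 8 := by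
      filter_upwards [hEn.eventually_lt_const zero_lt_one] with n hn
      obtain ⟨hpn, hcn, htRn⟩ := energy_decomp hbnn hcnn (ne_top_of_lt hn)
      have hSn : (∑' p : X × X, b p.1 p.2 * ((v p.1 - φ0 n p.1) - (v p.2 - φ0 n p.2)) ^ 2) ≤ 2 := by
        have ht1 : (energy b c (fun x => v x - φ0 n x)).toReal ≤ 1 := by
          have := ENNReal.toReal_mono (by norm_num : (1:ℝ≥0∞) ≠ ⊤) hn.le
          simpa using this
        have hC2n : (0:ℝ) ≤ ∑' x, c x * (v x - φ0 n x) ^ 2 :=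
          tsum_nonneg fun x => mul_nonneg (hcnn x) (sq_nonneg _)
        rw [htRn] at ht1
        linarith
      have hptle : ∀ p : X × X, b p.1 p.2 * ((v p.1 - ψ n p.1) - (v p.2 - ψ n p.2)) ^ 2
          ≤ 8 * (b p.1 p.2 * (v p.1 - v p.2) ^ 2)
            + 4 * (b p.1 p.2 * ((v p.1 - φ0 n p.1) - (v p.2 - φ0 n p.2)) ^ 2) := by
        intro p
        have hcl := clamp_sq_le (φ0 n p.1) (φ0 n p.2) (v p.1) (v p.2)
        have hreal : ((v p.1 - ψ n p.1) - (v p.2 - ψ n p.2)) ^ 2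
            ≤ 8 * (v p.1 - v p.2) ^ 2 + 4 * ((v p.1 - φ0 n p.1) - (v p.2 - φ0 n p.2)) ^ 2 := by
          simp only [hψdef]
          nlinarith [hcl, sq_nonneg (v p.1 - v p.2), sq_nonneg (φ0 n p.1 - φ0 n p.2),
            sq_nonneg ((v p.1 - v p.2) + (min (max (φ0 n p.1) 0) (v p.1) - min (max (φ0 n p.2) 0) (v p.2))),
            sq_nonneg (2 * (v p.1 - v p.2) - (φ0 n p.1 - φ0 n p.2))]
        nlinarith [mul_le_mul_of_nonneg_left hreal (hbnn p.1 p.2)]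
      have hsummand : Summable (fun p : X × X => 8 * (b p.1 p.2 * (v p.1 - v p.2) ^ 2)
          + 4 * (b p.1 p.2 * ((v p.1 - φ0 n p.1) - (v p.2 - φ0 n p.2)) ^ 2)) :=
        (hpairv.mul_left 8).add (hpn.mul_left 4)
      have hnn : ∀ p : X × X, 0 ≤ b p.1 p.2 * ((v p.1 - ψ n p.1) - (v p.2 - ψ n p.2)) ^ 2 :=
        fun p => mul_nonneg (hbnn _ _) (sq_nonneg _)
      have hsum := Summable.of_nonneg_of_le hnn hptle hsummand
      refine ⟨hsum, ?_⟩
      calc (∑' p : X × X, b p.1 p.2 * ((v p.1 - ψ n p.1) - (v p.2 - ψ n p.2)) ^ 2)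
          ≤ ∑' p : X × X, (8 * (b p.1 p.2 * (v p.1 - v p.2) ^ 2)
              + 4 * (b p.1 p.2 * ((v p.1 - φ0 n p.1) - (v p.2 - φ0 n p.2)) ^ 2)) :=
            Summable.tsum_le_tsum hptle hsum hsummand
        _ = 8 * (∑' p : X × X, b p.1 p.2 * (v p.1 - v p.2) ^ 2)
            + 4 * (∑' p : X × X, b p.1 p.2 * ((v p.1 - φ0 n p.1) - (v p.2 - φ0 n p.2)) ^ 2) := by
            rw [Summable.tsum_add (hpairv.mul_left 8) (hpn.mul_left 4), tsum_mul_left, tsum_mul_left]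
        _ ≤ 8 * (∑' p : X × X, b p.1 p.2 * (v p.1 - v p.2) ^ 2) + 8 := by linarith
    -- the remainder tends to zero
    have hR : Tendsto (fun n => ∑' p : X × X,
        b p.1 p.2 * (v p.1 - v p.2) * ((v p.1 - ψ n p.1) - (v p.2 - ψ n p.2))) atTop (nhds 0) := by
      rw [NormedAddCommGroup.tendsto_nhds_zero]
      intro ε hε
      set M : ℝ := 8 * (∑' p : X × X, b p.1 p.2 * (v p.1 - v p.2) ^ 2) + 8 with hMdef
      have hMpos : 0 < M := by rw [hMdef]; linarith
      set t : ℝ := max (4 * M / ε) 1 with htdef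
      have ht1 : (1:ℝ) ≤ t := le_max_right _ _
      have htpos : 0 < t := lt_of_lt_of_le one_pos ht1
      have htM : 1 / (2 * t) * M ≤ ε / 8 := by
        have h4 : 4 * M / ε ≤ t := le_max_left _ _
        have h5 : 4 * M ≤ t * ε := by
          have := (div_le_iff₀ hε).mp h4
          linarith
        rw [div_mul_eq_mul_div, one_mul, div_le_div_iff₀ (by linarith) (by norm_num)]
        nlinarith [htpos, hε]
      have hδpos : 0 < ε / (4 * t) := by positivity
      obtain ⟨S, hS⟩ := ((tendsto_tsum_compl_atTop_zero
        (fun p : X × X => b p.1 p.2 * (v p.1 - v p.2) ^ 2)).eventually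
        (gt_mem_nhds hδpos)).exists
      have hfin : Tendsto (fun n => ∑ p ∈ S,
          b p.1 p.2 * (v p.1 - v p.2) * ((v p.1 - ψ n p.1) - (v p.2 - ψ n p.2))) atTop (nhds 0) := by
        have hterm : ∀ p : X × X, Tendsto (fun n =>
            b p.1 p.2 * (v p.1 - v p.2) * ((v p.1 - ψ n p.1) - (v p.2 - ψ n p.2))) atTop (nhds 0) := by
          intro p
          have h1 : Tendsto (fun n => v p.1 - ψ n p.1) atTop (nhds 0) := by
            have := (tendsto_const_nhds (x := v p.1) (f := atTop (α := ℕ))).sub (hψpt p.1)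
            simpa using this
          have h2 : Tendsto (fun n => v p.2 - ψ n p.2) atTop (nhds 0) := by
            have := (tendsto_const_nhds (x := v p.2) (f := atTop (α := ℕ))).sub (hψpt p.2)
            simpa using this
          have h3 := (h1.sub h2).const_mul (b p.1 p.2 * (v p.1 - v p.2))
          simpa using h3
        have := tendsto_finset_sum S (fun p _ => hterm p)
        simpa using this
      have hfin2 : ∀ᶠ n in atTop, |∑ p ∈ S,
          b p.1 p.2 * (v p.1 - v p.2) * ((v p.1 - ψ n p.1) - (v p.2 - ψ n p.2))| < ε / 2 := by
        have := hfin.eventually (gt_mem_nhds (show (0:ℝ) < ε / 2 by linarith))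
        -- need abs; use norm version
        rw [NormedAddCommGroup.tendsto_nhds_zero] at hfin
        exact (hfin (ε/2) (by linarith)).mono fun n h => by simpa using h
      filter_upwards [hgnE, hfin2] with n hn hf
      obtain ⟨hgsum, hgle⟩ := hn
      -- summability of the cross term
      have habsn : Summable (fun p : X × X =>
          |b p.1 p.2 * (v p.1 - v p.2) * ((v p.1 - ψ n p.1) - (v p.2 - ψ n p.2))|) := by
        refine Summable.of_nonneg_of_le (fun p => abs_nonneg _)
          (fun p => amgm _ _ _ t (hbnn _ _) htpos)
          ((hpairv.mul_left (t/2)).add (hgsum.mul_left (1/(2*t))))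
      have hcross : Summable (fun p : X × X =>
          b p.1 p.2 * (v p.1 - v p.2) * ((v p.1 - ψ n p.1) - (v p.2 - ψ n p.2))) :=
        summable_abs_iff.mp habsn
      -- split into S and complement
      have hsplit := Summable.sum_add_tsum_subtype_compl hcross S
      -- tail bound
      have htail : |∑' p : {p : X × X // p ∉ S},
          b p.val.1 p.val.2 * (v p.val.1 - v p.val.2) * ((v p.val.1 - ψ n p.val.1) - (v p.val.2 - ψ n p.val.2))|
          ≤ ε / 8 + ε / 8 := by
        have habsr : Summable (fun p : {p : X × X // p ∉ S} =>
            |b p.val.1 p.val.2 * (v p.val.1 - v p.val.2) * ((v p.val.1 - ψ n p.val.1) - (v p.val.2 - ψ n p.val.2))|) :=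
          habsn.comp_injective Subtype.val_injective
        have hb1 : Summable (fun p : {p : X × X // p ∉ S} =>
            b p.val.1 p.val.2 * (v p.val.1 - v p.val.2) ^ 2) :=
          hpairv.comp_injective Subtype.val_injective
        have hb2 : Summable (fun p : {p : X × X // p ∉ S} =>
            b p.val.1 p.val.2 * ((v p.val.1 - ψ n p.val.1) - (v p.val.2 - ψ n p.val.2)) ^ 2) :=
          hgsum.comp_injective Subtype.val_injective
        have h1 : |∑' p : {p : X × X // p ∉ S},
            b p.val.1 p.val.2 * (v p.val.1 - v p.val.2) * ((v p.val.1 - ψ n p.val.1) - (v p.val.2 - ψ n p.val.2))|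
            ≤ ∑' p : {p : X × X // p ∉ S},
            |b p.val.1 p.val.2 * (v p.val.1 - v p.val.2) * ((v p.val.1 - ψ n p.val.1) - (v p.val.2 - ψ n p.val.2))| := by
          have hnorm : Summable (fun p : {p : X × X // p ∉ S} =>
              ‖b p.val.1 p.val.2 * (v p.val.1 - v p.val.2) * ((v p.val.1 - ψ n p.val.1) - (v p.val.2 - ψ n p.val.2))‖) := by
            simpa only [Real.norm_eq_abs] using habsr
          simpa only [Real.norm_eq_abs] using norm_tsum_le_tsum_norm hnorm
        refine h1.trans ?_
        have h2 : ∑' p : {p : X × X // p ∉ S},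
            |b p.val.1 p.val.2 * (v p.val.1 - v p.val.2) * ((v p.val.1 - ψ n p.val.1) - (v p.val.2 - ψ n p.val.2))|
            ≤ ∑' p : {p : X × X // p ∉ S},
              (t/2 * (b p.val.1 p.val.2 * (v p.val.1 - v p.val.2) ^ 2)
               + 1/(2*t) * (b p.val.1 p.val.2 * ((v p.val.1 - ψ n p.val.1) - (v p.val.2 - ψ n p.val.2)) ^ 2)) := by
          refine Summable.tsum_le_tsum (fun p => amgm _ _ _ t (hbnn _ _) htpos) habsr
            ((hb1.mul_left (t/2)).add (hb2.mul_left (1/(2*t))))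
        refine h2.trans ?_
        rw [Summable.tsum_add (hb1.mul_left (t/2)) (hb2.mul_left (1/(2*t))), tsum_mul_left, tsum_mul_left]
        have h3 : (∑' p : {p : X × X // p ∉ S}, b p.val.1 p.val.2 * (v p.val.1 - v p.val.2) ^ 2)
            ≤ ε / (4 * t) := hS.le
        have h4 : (∑' p : {p : X × X // p ∉ S},
            b p.val.1 p.val.2 * ((v p.val.1 - ψ n p.val.1) - (v p.val.2 - ψ n p.val.2)) ^ 2) ≤ M := by
          refine le_trans ?_ hgle
          refine Summable.tsum_le_tsum_of_inj Subtype.val Subtype.val_injective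
            (fun p _ => mul_nonneg (hbnn _ _) (sq_nonneg _)) (fun p => le_rfl) hb2 hgsum
        have h5 : 0 ≤ ∑' p : {p : X × X // p ∉ S}, b p.val.1 p.val.2 * (v p.val.1 - v p.val.2) ^ 2 :=
          tsum_nonneg fun p => mul_nonneg (hbnn _ _) (sq_nonneg _)
        have h6 : t/2 * (∑' p : {p : X × X // p ∉ S}, b p.val.1 p.val.2 * (v p.val.1 - v p.val.2) ^ 2)
            ≤ ε / 8 := by
          have := mul_le_mul_of_nonneg_left h3 (by positivity : (0:ℝ) ≤ t/2)
          have heq : t/2 * (ε / (4*t)) = ε / 8 := by field_simp; ring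
          linarith
        have h7 : 1/(2*t) * (∑' p : {p : X × X // p ∉ S},
            b p.val.1 p.val.2 * ((v p.val.1 - ψ n p.val.1) - (v p.val.2 - ψ n p.val.2)) ^ 2) ≤ ε / 8 := by
          have h8 : 0 ≤ (1:ℝ)/(2*t) := by positivity
          have := mul_le_mul_of_nonneg_left h4 h8
          linarith [htM]
        linarith
      rw [Real.norm_eq_abs, ← hsplit]
      calc |∑ p ∈ S, b p.1 p.2 * (v p.1 - v p.2) * ((v p.1 - ψ n p.1) - (v p.2 - ψ n p.2))
            + ∑' p : {p : X × X // p ∉ S},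
              b p.val.1 p.val.2 * (v p.val.1 - v p.val.2) * ((v p.val.1 - ψ n p.val.1) - (v p.val.2 - ψ n p.val.2))|
          ≤ |∑ p ∈ S, b p.1 p.2 * (v p.1 - v p.2) * ((v p.1 - ψ n p.1) - (v p.2 - ψ n p.2))|
            + |∑' p : {p : X × X // p ∉ S},
              b p.val.1 p.val.2 * (v p.val.1 - v p.val.2) * ((v p.val.1 - ψ n p.val.1) - (v p.val.2 - ψ n p.val.2))| :=
            abs_add_le _ _
        _ < ε := by
            have := htail
            linarith [hf]
    -- limit of the pair part
    have hPS : Tendsto (fun n => ∑' p : X × X,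
        b p.1 p.2 * (v p.1 - v p.2) * (ψ n p.1 - ψ n p.2)) atTop
        (nhds (∑' p : X × X, b p.1 p.2 * (v p.1 - v p.2) ^ 2)) := by
      have hcongr : ∀ᶠ n in atTop, (∑' p : X × X, b p.1 p.2 * (v p.1 - v p.2) ^ 2)
          - (∑' p : X × X, b p.1 p.2 * (v p.1 - v p.2) * ((v p.1 - ψ n p.1) - (v p.2 - ψ n p.2)))
          = ∑' p : X × X, b p.1 p.2 * (v p.1 - v p.2) * (ψ n p.1 - ψ n p.2) := by
        filter_upwards [hgnE] with n hn
        have habsn : Summable (fun p : X × X =>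
            |b p.1 p.2 * (v p.1 - v p.2) * ((v p.1 - ψ n p.1) - (v p.2 - ψ n p.2))|) :=
          Summable.of_nonneg_of_le (fun p => abs_nonneg _)
            (fun p => amgm _ _ _ 1 (hbnn _ _) one_pos)
            ((hpairv.mul_left (1/2)).add (hn.1.mul_left (1/(2*1))))
        have hcross := summable_abs_iff.mp habsn
        rw [← Summable.tsum_sub hpairv hcross]
        exact tsum_congr fun p => by ring
      have hlim := (tendsto_const_nhds
        (x := ∑' p : X × X, b p.1 p.2 * (v p.1 - v p.2) ^ 2) (f := atTop (α := ℕ))).sub hR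
      rw [sub_zero] at hlim
      exact hlim.congr' hcongr
    -- the main limit
    have hTlim : Tendsto (fun n => ∑' x, m x * lap b c m v x * ψ n x) atTop
        (nhds ((1/2) * (∑' p : X × X, b p.1 p.2 * (v p.1 - v p.2) ^ 2) + ∑' x, c x * v x ^ 2)) := by
      have h1 := (hPS.const_mul (1/2 : ℝ)).add hCS
      exact Tendsto.congr (fun n => ((hgreen n).2).symm) h1
    -- split into positive and negative parts
    have hsψ1 : ∀ n, Summable (fun x => max (m x * lap b c m v x) 0 * ψ n x) := by
      intro n
      apply summable_of_finite_support
      refine Set.Finite.subset (hψfin n) fun x hx => ?_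
      simp only [Function.mem_support] at hx ⊢
      intro h0
      exact hx (by simp [h0])
    have hsψ2 : ∀ n, Summable (fun x => max (-(m x * lap b c m v x)) 0 * ψ n x) := by
      intro n
      apply summable_of_finite_support
      refine Set.Finite.subset (hψfin n) fun x hx => ?_
      simp only [Function.mem_support] at hx ⊢
      intro h0
      exact hx (by simp [h0])
    have hTdecomp : ∀ n, (∑' x, m x * lap b c m v x * ψ n x)
        = (∑' x, max (m x * lap b c m v x) 0 * ψ n x)
          - ∑' x, max (-(m x * lap b c m v x)) 0 * ψ n x := by
      intro n
      rw [← Summable.tsum_sub (hsψ1 n) (hsψ2 n)]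
      refine tsum_congr fun x => ?_
      rw [← sub_mul, max_zero_sub]
    have hLm : ∀ x, max (-(m x * lap b c m v x)) 0 * v x
        = max (-((m x * lap b c m v x) * v x)) 0 := by
      intro x
      rw [max_mul_of_nonneg _ _ (hvpos x).le, zero_mul, neg_mul]
    have hN : Tendsto (fun n => ∑' x, max (-(m x * lap b c m v x)) 0 * ψ n x) atTop
        (nhds (∑' x, max (-(m x * lap b c m v x)) 0 * v x)) := by
      refine tendsto_tsum_of_dominated_convergence
        (bound := fun x => max (-((m x * lap b c m v x) * v x)) 0) hiii
        (fun x => (hψpt x).const_mul _) (Eventually.of_forall fun n x => ?_)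
      show ‖max (-(m x * lap b c m v x)) 0 * ψ n x‖ ≤ max (-((m x * lap b c m v x) * v x)) 0
      rw [Real.norm_eq_abs, abs_of_nonneg (mul_nonneg (le_max_right _ _) (hψnn n x)), ← hLm x]
      exact mul_le_mul_of_nonneg_left (hψle n x) (le_max_right _ _)
    have hP : Tendsto (fun n => ∑' x, max (m x * lap b c m v x) 0 * ψ n x) atTop
        (nhds ((1/2) * (∑' p : X × X, b p.1 p.2 * (v p.1 - v p.2) ^ 2) + (∑' x, c x * v x ^ 2)
          + ∑' x, max (-(m x * lap b c m v x)) 0 * v x)) := by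
      have h1 := hTlim.add hN
      refine h1.congr fun n => ?_
      rw [hTdecomp n]
      ring
    have hsumP : Summable (fun x => max (m x * lap b c m v x) 0 * v x) := by
      have hbd : ∀ u : Finset X, ∑ x ∈ u, max (m x * lap b c m v x) 0 * v x
          ≤ (1/2) * (∑' p : X × X, b p.1 p.2 * (v p.1 - v p.2) ^ 2) + (∑' x, c x * v x ^ 2)
            + ∑' x, max (-(m x * lap b c m v x)) 0 * v x := by
        intro u
        have hu : Tendsto (fun n => ∑ x ∈ u, max (m x * lap b c m v x) 0 * ψ n x) atTop
            (nhds (∑ x ∈ u, max (m x * lap b c m v x) 0 * v x)) :=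
          tendsto_finset_sum u (fun x _ => (hψpt x).const_mul _)
        refine le_of_tendsto_of_tendsto' hu hP fun n => ?_
        exact Summable.sum_le_tsum u (fun x _ => mul_nonneg (le_max_right _ _) (hψnn n x)) (hsψ1 n)
      exact summable_of_sum_le (fun x => mul_nonneg (le_max_right _ _) (hvpos x).le) hbd
    have hPeq : ∑' x, max (m x * lap b c m v x) 0 * v x
        = (1/2) * (∑' p : X × X, b p.1 p.2 * (v p.1 - v p.2) ^ 2) + (∑' x, c x * v x ^ 2)
          + ∑' x, max (-(m x * lap b c m v x)) 0 * v x := by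
      have hlim2 : Tendsto (fun n => ∑' x, max (m x * lap b c m v x) 0 * ψ n x) atTop
          (nhds (∑' x, max (m x * lap b c m v x) 0 * v x)) := by
        refine tendsto_tsum_of_dominated_convergence
          (bound := fun x => max (m x * lap b c m v x) 0 * v x) hsumP
          (fun x => (hψpt x).const_mul _) (Eventually.of_forall fun n x => ?_)
        show ‖max (m x * lap b c m v x) 0 * ψ n x‖ ≤ max (m x * lap b c m v x) 0 * v x
        rw [Real.norm_eq_abs, abs_of_nonneg (mul_nonneg (le_max_right _ _) (hψnn n x))]
        exact mul_le_mul_of_nonneg_left (hψle n x) (le_max_right _ _)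
      exact tendsto_nhds_unique hlim2 hP
    have hsumN : Summable (fun x => max (-(m x * lap b c m v x)) 0 * v x) :=
      hiii.congr fun x => (hLm x).symm
    have hsumabs : Summable (fun x => |(m x * lap b c m v x) * v x|) := by
      refine (hsumP.add hsumN).congr fun x => ?_
      rw [← add_mul, max_zero_add, abs_mul (m x * lap b c m v x) (v x),
        abs_of_nonneg (hvpos x).le]
    refine ⟨hsumabs, ?_⟩
    have h1 : ∑' x, (m x * lap b c m v x) * v x
        = (∑' x, max (m x * lap b c m v x) 0 * v x)
          - ∑' x, max (-(m x * lap b c m v x)) 0 * v x := by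
      rw [← Summable.tsum_sub hsumP hsumN]
      refine tsum_congr fun x => ?_
      rw [← sub_mul, max_zero_sub]
    rw [h1, hPeq]
    ring
  -- assemble the three statements
  have hiff2 : (Summable fun x => m x * |w x| * v x ^ 2) ↔
      (Summable fun x => m x * max (-w x) 0 * v x ^ 2) := by
    constructor
    · intro h
      refine Summable.of_nonneg_of_le (fun x => ?_) (fun x => ?_) h
      · exact mul_nonneg (mul_nonneg (hmp x).le (le_max_right _ _)) (sq_nonneg _)
      · refine mul_le_mul_of_nonneg_right (mul_le_mul_of_nonneg_left ?_ (hmp x).le) (sq_nonneg _)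
        exact max_le (neg_le_abs _) (abs_nonneg _)
    · intro h
      have h3 := (summable_congr idw3).mp h
      have h2 := (core h3).1
      exact (summable_congr idw2).mpr h2
  have habs2 : ∀ x, m x * |lap b c m (fun y => v y ^ 2) x|
      = |2 * ((m x * lap b c m v x) * v x)
          - ((∑' y, b x y * (v x - v y) ^ 2) + c x * v x ^ 2)| := by
    intro x
    rw [← idd x, abs_mul, abs_of_pos (hmp x)]
  have hiff1 : (Summable fun x => m x * |lap b c m (fun y => v y ^ 2) x|) ↔
      (Summable fun x => m x * |w x| * v x ^ 2) := by
    constructor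
    · intro h
      have h' := (summable_congr habs2).mp h
      have h3 : Summable fun x => max (-((m x * lap b c m v x) * v x)) 0 := by
        refine Summable.of_nonneg_of_le (fun x => le_max_right _ _) (fun x => ?_)
          (h'.mul_left (1/2))
        refine max_le ?_ (by positivity)
        have hle := le_abs_self (-(2 * ((m x * lap b c m v x) * v x)
          - ((∑' y, b x y * (v x - v y) ^ 2) + c x * v x ^ 2)))
        rw [abs_neg] at hle
        have := hdnn x
        linarith
      have h2 := (core h3).1
      exact (summable_congr idw2).mpr h2
    · intro h
      have h2 := (summable_congr idw2).mp h
      refine (summable_congr habs2).mpr ?_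
      refine Summable.of_nonneg_of_le (fun x => abs_nonneg _) (fun x => ?_)
        ((h2.mul_left 2).add hdsum)
      calc |2 * ((m x * lap b c m v x) * v x)
            - ((∑' y, b x y * (v x - v y) ^ 2) + c x * v x ^ 2)|
          ≤ |2 * ((m x * lap b c m v x) * v x)|
            + |(∑' y, b x y * (v x - v y) ^ 2) + c x * v x ^ 2| := abs_sub _ _
        _ ≤ 2 * |(m x * lap b c m v x) * v x|
            + ((∑' y, b x y * (v x - v y) ^ 2) + c x * v x ^ 2) := by
            rw [abs_mul, abs_of_nonneg (hdnn x)]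
            simp
  refine ⟨hiff1, hiff2, ?_⟩
  intro hi
  have h' := (summable_congr habs2).mp hi
  have h3 : Summable fun x => max (-((m x * lap b c m v x) * v x)) 0 := by
    refine Summable.of_nonneg_of_le (fun x => le_max_right _ _) (fun x => ?_)
      (h'.mul_left (1/2))
    refine max_le ?_ (by positivity)
    have hle := le_abs_self (-(2 * ((m x * lap b c m v x) * v x)
      - ((∑' y, b x y * (v x - v y) ^ 2) + c x * v x ^ 2)))
    rw [abs_neg] at hle
    have := hdnn x
    linarith
  obtain ⟨hsumabs, htsumLv⟩ := core h3
  have hsumLv : Summable (fun x => (m x * lap b c m v x) * v x) := summable_abs_iff.mp hsumabs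
  constructor
  · -- energy = wsum
    rw [htoRv, wsum]
    rw [← htsumLv]
    refine (tsum_congr fun x => ?_).symm
    rw [hlapv x]
    ring
  · -- second identity
    have h1 : ∀ x, m x * lap b c m (fun y => v y ^ 2) x
        = 2 * ((m x * lap b c m v x) * v x)
          - ((∑' y, b x y * (v x - v y) ^ 2) + c x * v x ^ 2) := idd
    rw [tsum_congr h1, Summable.tsum_sub (hsumLv.mul_left 2) hdsum, tsum_mul_left, htsumLv, hdtsum]
    ring



end HG
end
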